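/- arXiv:1905.12173 — 7 statements merged into one kernel-verified Lean document; each statement's English description precedes it below -/
import Mathlib

section
/- The function u ↦ (2·κ(1) − 2·κ(u))/(2 − 2u) tends to +∞ as u tends to 1 from the left (i.e., along the filter of neighborhoods of 1 within the interval [−1, 1)). Consequently the squared distance between NTK feature maps of unit vectors, divided by the squared distance between the vectors, is unbounded. -/
open Real Filter

noncomputable def kappa0 (u : ℝ) : ℝ := (π - Real.arccos u) / π
noncomputable def kappa1 (u : ℝ) : ℝ :=
  (u * (π - Real.arccos u) + Real.sqrt (1 - u ^ 2)) / π
noncomputable def kappa (u : ℝ) : ℝ := u * kappa0 u + kappa1 u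

theorem ntk_not_lipschitz_limit :
    Tendsto (fun u : ℝ => (2 * kappa 1 - 2 * kappa u) / (2 - 2 * u))
      (nhdsWithin 1 (Set.Ico (-1 : ℝ) 1)) atTop := by
  have hπ : (0:ℝ) < π := Real.pi_pos
  have h1 : Tendsto (fun u : ℝ => 1 - u) (nhdsWithin 1 (Set.Ico (-1:ℝ) 1))
      (nhdsWithin 0 (Set.Ioi 0)) := by
    apply tendsto_nhdsWithin_of_tendsto_nhds_of_eventually_within
    · have : Tendsto (fun u : ℝ => 1 - u) (nhds 1) (nhds (1-1)) :=
        Filter.Tendsto.const_sub 1 tendsto_id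
      simpa using this.mono_left nhdsWithin_le_nhds
    · filter_upwards [self_mem_nhdsWithin] with u hu
      exact sub_pos.mpr hu.2
  have h2 : Tendsto (fun u : ℝ => Real.sqrt (1 - u)) (nhdsWithin 1 (Set.Ico (-1:ℝ) 1))
      (nhdsWithin 0 (Set.Ioi 0)) := by
    apply tendsto_nhdsWithin_of_tendsto_nhds_of_eventually_within
    · have hc : Tendsto Real.sqrt (nhds 0) (nhds 0) := by
        simpa using (Real.continuous_sqrt.tendsto 0)
      exact hc.comp (h1.mono_right nhdsWithin_le_nhds)
    · filter_upwards [self_mem_nhdsWithin] with u hu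
      exact Real.sqrt_pos.mpr (sub_pos.mpr hu.2)
  have h3 : Tendsto (fun u : ℝ => (Real.sqrt (1 - u))⁻¹)
      (nhdsWithin 1 (Set.Ico (-1:ℝ) 1)) atTop := tendsto_inv_nhdsGT_zero.comp h2
  have h4 : Tendsto (fun u : ℝ => (1/(2*π)) * (Real.sqrt (1 - u))⁻¹)
      (nhdsWithin 1 (Set.Ico (-1:ℝ) 1)) atTop := h3.const_mul_atTop (by positivity)
  refine tendsto_atTop_mono' _ ?_ h4
  have hge : ∀ᶠ u in nhdsWithin (1:ℝ) (Set.Ico (-1:ℝ) 1), (3/4:ℝ) < u :=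
    eventually_nhdsWithin_of_eventually_nhds (eventually_gt_nhds (by norm_num))
  filter_upwards [self_mem_nhdsWithin, hge] with u hu hu34
  have hu1 : u < 1 := hu.2
  have hk1 : kappa 1 = 2 := by
    simp [kappa, kappa0, kappa1, Real.arccos_one]
    norm_num
  have ht : 0 < 1 - u := by linarith
  have hst : 0 < Real.sqrt (1 - u) := Real.sqrt_pos.mpr ht
  have ha0 : 0 ≤ Real.arccos u := Real.arccos_nonneg u
  have harc : Real.sqrt (1 - u^2) ≤ Real.arccos u := by
    have := Real.sin_le ha0
    rwa [Real.sin_arccos] at this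
  have hs0 : 0 ≤ Real.sqrt (1 - u^2) := Real.sqrt_nonneg _
  have hs2 : Real.sqrt (1 - u) ≤ Real.sqrt (1 - u^2) := by
    apply Real.sqrt_le_sqrt; nlinarith
  -- numerator bound
  have hnum : Real.sqrt (1-u) / π ≤ 2 * kappa 1 - 2 * kappa u := by
    rw [hk1]
    have hkeq : kappa u = (2*u*(π - Real.arccos u) + Real.sqrt (1 - u^2)) / π := by
      unfold kappa kappa0 kappa1; field_simp; ring
    rw [hkeq]
    have key : Real.sqrt (1-u) ≤ 4*π*(1-u) + 4*u*Real.arccos u - 2*Real.sqrt (1-u^2) := by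
      nlinarith [mul_nonneg (by linarith : (0:ℝ) ≤ 4*u) (sub_nonneg.mpr harc)]
    have heq : 2*2 - 2*((2*u*(π - Real.arccos u) + Real.sqrt (1-u^2))/π)
        = (4*π*(1-u) + 4*u*Real.arccos u - 2*Real.sqrt (1-u^2))/π := by
      field_simp; ring
    rw [heq]
    exact div_le_div_of_nonneg_right key hπ.le
  have hden : 0 < 2 - 2*u := by linarith
  calc (1/(2*π)) * (Real.sqrt (1 - u))⁻¹
      = (Real.sqrt (1-u) / π) / (2 - 2*u) := by
        have h : (1 - u) = Real.sqrt (1-u) * Real.sqrt (1-u) := (Real.mul_self_sqrt ht.le).symm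
        field_simp
        nlinarith [Real.sq_sqrt ht.le]
    _ ≤ (2 * kappa 1 - 2 * kappa u) / (2 - 2*u) := by
        gcongr
end

section
/- For every p ≥ 2 and every L > 0 there exist unit vectors x, y in the Euclidean space ℝ^p with x ≠ y such that 2·κ(1) − 2·κ(⟨x, y⟩) > L² · ‖x − y‖². In other words, the kernel mapping of the two-layer ReLU NTK, restricted to the unit sphere, is not Lipschitz for any constant L. -/
set_option maxHeartbeats 1000000

open Real

lemma kappa_one : kappa 1 = 2 := by
  simp [kappa, kappa0, kappa1, Real.arccos_one, Real.pi_ne_zero]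
  norm_num

lemma kappa_key (L u : ℝ) (hL : 0 < L) (hu34 : 3/4 ≤ u) (hu1 : u < 1)
    (hε : 1 - u < (1 / (2 * π * L ^ 2)) ^ 2) :
    2 * kappa 1 - 2 * kappa u > L ^ 2 * (2 - 2 * u) := by
  have hπ := Real.pi_pos
  set a := Real.arccos u with ha
  set s := Real.sqrt (1 - u ^ 2) with hsdef
  have ha0 : 0 ≤ a := Real.arccos_nonneg u
  have hsa : s ≤ a := by
    have := Real.sin_le ha0
    rwa [ha, Real.sin_arccos] at this
  have hc : 0 < 2 * π * L ^ 2 := by positivity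
  have hε0 : 0 < 1 - u := by linarith
  have hs1 : Real.sqrt (1 - u) ≤ s := by
    apply Real.sqrt_le_sqrt; nlinarith
  have h2 : Real.sqrt (1 - u) < 1 / (2 * π * L ^ 2) := by
    rw [Real.sqrt_lt' (by positivity)]
    exact hε
  have hq : Real.sqrt (1 - u) ^ 2 = 1 - u := Real.sq_sqrt (le_of_lt hε0)
  have hqpos : 0 < Real.sqrt (1 - u) := Real.sqrt_pos.mpr hε0
  have hcc : 2 * π * L ^ 2 * (1 / (2 * π * L ^ 2)) = 1 := by field_simp
  have h3 : 2 * π * L ^ 2 * (1 - u) < Real.sqrt (1 - u) := by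
    nlinarith [mul_lt_mul_of_pos_left h2 hc, mul_lt_mul_of_pos_right
      (mul_lt_mul_of_pos_left h2 hc) hqpos]
  rw [kappa_one, kappa, kappa0, kappa1]
  have hform : (2:ℝ) * 2 - 2 * (u * ((π - a) / π) + (u * (π - a) + s) / π)
      = (4 * π - 2 * (2 * u * (π - a) + s)) / π := by
    field_simp; ring
  rw [gt_iff_lt, hform, lt_div_iff₀ hπ]
  nlinarith [mul_nonneg (by linarith : (0:ℝ) ≤ 4 * u - 3) ha0, mul_pos hπ hε0]

theorem ntk_not_lipschitz (p : ℕ) (hp : 2 ≤ p) (L : ℝ) (hL : 0 < L) :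
    ∃ x y : EuclideanSpace ℝ (Fin p), ‖x‖ = 1 ∧ ‖y‖ = 1 ∧ x ≠ y ∧
      2 * kappa 1 - 2 * kappa (inner ℝ x y : ℝ) > L ^ 2 * ‖x - y‖ ^ 2 := by
  have hπ := Real.pi_pos
  set ε : ℝ := min (1/4) ((1 / (2 * π * L ^ 2)) ^ 2 / 2) with hεdef
  have hc : (0:ℝ) < (1 / (2 * π * L ^ 2)) ^ 2 / 2 := by positivity
  have hε0 : 0 < ε := lt_min (by norm_num) hc
  have hε14 : ε ≤ 1/4 := min_le_left _ _
  have hεc : ε < (1 / (2 * π * L ^ 2)) ^ 2 := by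
    have := min_le_right (1/4 : ℝ) ((1 / (2 * π * L ^ 2)) ^ 2 / 2)
    linarith
  set u : ℝ := 1 - ε with hudef
  have hu34 : 3/4 ≤ u := by rw [hudef]; linarith
  have hu1 : u < 1 := by rw [hudef]; linarith
  have hu0 : 0 ≤ u := by linarith
  set s : ℝ := Real.sqrt (1 - u ^ 2) with hsdef
  have hs2 : s ^ 2 = 1 - u ^ 2 := Real.sq_sqrt (by nlinarith)
  have hspos : 0 < s := Real.sqrt_pos.mpr (by nlinarith)
  set i : Fin p := ⟨0, by omega⟩ with hi
  set j : Fin p := ⟨1, by omega⟩ with hj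
  have hij : j ≠ i := by simp [hi, hj, Fin.ext_iff]
  have hij2 : i ≠ j := fun h => hij h.symm
  set x : EuclideanSpace ℝ (Fin p) := EuclideanSpace.single i 1 with hx
  set y : EuclideanSpace ℝ (Fin p) := EuclideanSpace.single i u + EuclideanSpace.single j s with hy
  have hyi : y i = u := by
    rw [hy]
    show EuclideanSpace.single i u i + EuclideanSpace.single j s i = u
    rw [EuclideanSpace.single_apply, EuclideanSpace.single_apply, if_pos rfl, if_neg hij2]
    ring
  have hyj : y j = s := by
    rw [hy]
    show EuclideanSpace.single i u j + EuclideanSpace.single j s j = s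
    rw [EuclideanSpace.single_apply, EuclideanSpace.single_apply, if_pos rfl, if_neg hij]
    ring
  have hxnorm : ‖x‖ = 1 := by rw [hx]; simp
  have hinner : (inner ℝ x y : ℝ) = u := by
    rw [hx, EuclideanSpace.inner_single_left, hyi]
    simp
  have hynorm : ‖y‖ = 1 := by
    have h1 : (inner ℝ y y : ℝ) = 1 := by
      conv_lhs => rw [hy]
      rw [inner_add_left, EuclideanSpace.inner_single_left, EuclideanSpace.inner_single_left,
        ← hy, hyi, hyj]
      simp only [starRingEnd_apply, star_trivial]
      nlinarith
    have h2 : ‖y‖ ^ 2 = 1 := by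
      rw [← real_inner_self_eq_norm_sq, h1]
    nlinarith [norm_nonneg y, sq_nonneg (‖y‖ - 1)]
  have hne : x ≠ y := by
    intro h
    have h1 : x j = y j := by rw [h]
    rw [hyj, hx] at h1
    rw [show (EuclideanSpace.single i (1:ℝ)) j = if j = i then 1 else 0 from
      EuclideanSpace.single_apply i 1 j, if_neg hij] at h1
    exact hspos.ne h1
  have hdist : ‖x - y‖ ^ 2 = 2 - 2 * u := by
    rw [norm_sub_sq_real, hxnorm, hynorm, hinner]; ring
  refine ⟨x, y, hxnorm, hynorm, hne, ?_⟩
  rw [hinner, hdist]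
  exact kappa_key L u hL hu34 hu1 (by rw [hudef]; ring_nf; ring_nf at hεc; linarith)
end

section
/- Let H be a real inner product space and let x, y ∈ H be nonzero. Then 2 − 2·κ₀( ⟨x, y⟩ / (‖x‖·‖y‖) ) ≤ ‖x − y‖ / min(‖x‖, ‖y‖). This expresses that the (0-homogeneous) kernel mapping φ₀ of the arc-cosine-0 kernel satisfies ‖φ₀(x) − φ₀(y)‖ ≤ √( ‖x − y‖ / min(‖x‖, ‖y‖) ), since ‖φ₀(x) − φ₀(y)‖² = 2 − 2κ₀(⟨x,y⟩/(‖x‖‖y‖)). -/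
open Real

lemma arccos_le_sqrt (u : ℝ) (h1 : -1 ≤ u) (h2 : u ≤ 1) :
    2 / π * Real.arccos u ≤ Real.sqrt (2 - 2 * u) := by
  set t := Real.arccos u with ht
  have ht0 : 0 ≤ t := Real.arccos_nonneg u
  have htπ : t ≤ π := Real.arccos_le_pi u
  have hπ := Real.pi_pos
  have hkey : 2 / π * (t / 2) ≤ Real.sin (t / 2) :=
    Real.mul_le_sin (by linarith) (by linarith)
  have hsin_eq : Real.sin (t / 2) = Real.sqrt ((1 - u) / 2) := by
    rw [Real.sin_half_eq_sqrt ht0 (by linarith), ht, Real.cos_arccos h1 h2]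
  have h2u : (2 : ℝ) - 2 * u = 2 ^ 2 * ((1 - u) / 2) := by ring
  rw [h2u, Real.sqrt_mul (by positivity), Real.sqrt_sq (by norm_num)]
  nlinarith [hkey, hsin_eq, Real.sqrt_nonneg ((1 - u) / 2)]

lemma sqrt_le_dist_div {H : Type*} [NormedAddCommGroup H]
    [InnerProductSpace ℝ H] (x y : H) (hx : x ≠ 0) (hy : y ≠ 0)
    (h : ‖x‖ ≤ ‖y‖) :
    Real.sqrt (2 - 2 * ((inner ℝ x y : ℝ) / (‖x‖ * ‖y‖))) ≤ ‖x - y‖ / ‖x‖ := by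
  have ha : (0 : ℝ) < ‖x‖ := norm_pos_iff.mpr hx
  have hb : (0 : ℝ) < ‖y‖ := norm_pos_iff.mpr hy
  set a := ‖x‖
  set b := ‖y‖
  set c : ℝ := inner ℝ x y with hc
  have hcab : c ≤ a * b := real_inner_le_norm x y
  have hnorm : ‖x - y‖ ^ 2 = a ^ 2 - 2 * c + b ^ 2 := by
    rw [hc, @norm_sub_sq_real]
  have key : 2 - 2 * (c / (a * b)) ≤ (‖x - y‖ / a) ^ 2 := by
    rw [div_pow, hnorm]
    have hfact : (0 : ℝ) ≤ a * b + b ^ 2 - 2 * c := by nlinarith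
    have hprod := mul_nonneg (sub_nonneg.2 h) hfact
    have hL : 2 - 2 * (c / (a * b)) = (2 * (a * b) - 2 * c) / (a * b) := by
      field_simp
    rw [hL, div_le_div_iff₀ (by positivity) (by positivity)]
    nlinarith [ha.le, hb.le]
  calc Real.sqrt (2 - 2 * (c / (a * b))) ≤ Real.sqrt ((‖x - y‖ / a) ^ 2) :=
        Real.sqrt_le_sqrt key
    _ = ‖x - y‖ / a := Real.sqrt_sq (by positivity)

theorem phi0_homogeneous_holder {H : Type*} [NormedAddCommGroup H]
    [InnerProductSpace ℝ H] (x y : H) (hx : x ≠ 0) (hy : y ≠ 0) :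
    2 - 2 * kappa0 ((inner ℝ x y : ℝ) / (‖x‖ * ‖y‖)) ≤ ‖x - y‖ / min ‖x‖ ‖y‖ := by
  have hπ := Real.pi_pos
  set u : ℝ := (inner ℝ x y : ℝ) / (‖x‖ * ‖y‖) with hu
  have habs : |u| ≤ 1 := abs_real_inner_div_norm_mul_norm_le_one x y
  obtain ⟨h1, h2⟩ := abs_le.mp habs
  have hk : 2 - 2 * kappa0 u = 2 / π * Real.arccos u := by
    unfold kappa0
    field_simp
    ring
  rw [hk]
  have hstep := arccos_le_sqrt u h1 h2
  rcases le_total ‖x‖ ‖y‖ with h | h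
  · rw [min_eq_left h]
    exact hstep.trans (sqrt_le_dist_div x y hx hy h)
  · rw [min_eq_right h]
    have hsym := sqrt_le_dist_div y x hy hx h
    rw [real_inner_comm, mul_comm ‖y‖ ‖x‖, norm_sub_rev y x] at hsym
    exact hstep.trans hsym
end

section
/- Let H be a real inner product space and let x, y ∈ H be nonzero. Then ‖x‖² + ‖y‖² − 2·‖x‖·‖y‖·κ₁( ⟨x, y⟩ / (‖x‖·‖y‖) ) ≤ ‖x − y‖². This expresses that the kernel mapping of the homogeneous arc-cosine-1 kernel K₁(x, y) = ‖x‖·‖y‖·κ₁(⟨x,y⟩/(‖x‖‖y‖)) is non-expansive: K₁(x,x) + K₁(y,y) − 2K₁(x,y) ≤ ‖x − y‖². -/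
open Real

lemma le_kappa1 {u : ℝ} (h1 : -1 ≤ u) (h2 : u ≤ 1) : u ≤ kappa1 u := by
  have hpi : (0:ℝ) < π := Real.pi_pos
  have hsin : Real.sqrt (1 - u ^ 2) = Real.sin (Real.arccos u) := (Real.sin_arccos u).symm
  have hcos : Real.cos (Real.arccos u) = u := Real.cos_arccos h1 h2
  set θ := Real.arccos u with hθ
  have hθ0 : 0 ≤ θ := Real.arccos_nonneg u
  have hθpi : θ ≤ π := Real.arccos_le_pi u
  have key : u * θ ≤ Real.sin θ := by
    rcases le_or_gt u 0 with hu | hu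
    · have : u * θ ≤ 0 := mul_nonpos_of_nonpos_of_nonneg hu hθ0
      exact this.trans (Real.sin_nonneg_of_nonneg_of_le_pi hθ0 hθpi)
    · rcases eq_or_lt_of_le hθ0 with h0 | h0
      · simp [← h0]
      · have hlt : θ < π / 2 := by
          rw [hθ, Real.arccos_lt_pi_div_two]; exact hu
        have htan := Real.lt_tan h0 hlt
        have hcospos : 0 < Real.cos θ := by rw [hcos]; exact hu
        rw [Real.tan_eq_sin_div_cos, lt_div_iff₀ hcospos] at htan
        nlinarith
  have : 0 ≤ (u * (π - θ) + Real.sqrt (1 - u ^ 2)) / π - u := by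
    rw [hsin]
    have : u * (π - θ) + Real.sin θ - π * u = Real.sin θ - u * θ := by ring
    rw [div_sub' hpi.ne', this]
    apply div_nonneg (by linarith) hpi.le
  unfold kappa1
  linarith

theorem phi1_homogeneous_nonexpansive {H : Type*} [NormedAddCommGroup H]
    [InnerProductSpace ℝ H] (x y : H) (hx : x ≠ 0) (hy : y ≠ 0) :
    ‖x‖ ^ 2 + ‖y‖ ^ 2
        - 2 * ‖x‖ * ‖y‖ * kappa1 ((inner ℝ x y : ℝ) / (‖x‖ * ‖y‖))
      ≤ ‖x - y‖ ^ 2 := by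
  have hnx : (0:ℝ) < ‖x‖ := norm_pos_iff.mpr hx
  have hny : (0:ℝ) < ‖y‖ := norm_pos_iff.mpr hy
  have hprod : (0:ℝ) < ‖x‖ * ‖y‖ := mul_pos hnx hny
  set u : ℝ := (inner ℝ x y : ℝ) / (‖x‖ * ‖y‖) with hu
  have hib : |(inner ℝ x y : ℝ)| ≤ ‖x‖ * ‖y‖ := abs_real_inner_le_norm x y
  have h1 : -1 ≤ u := by
    rw [hu, le_div_iff₀ hprod]
    have := neg_le_of_abs_le hib
    linarith
  have h2 : u ≤ 1 := by
    rw [hu, div_le_one hprod]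
    exact le_of_abs_le hib
  have hk := le_kappa1 h1 h2
  have hinner : (inner ℝ x y : ℝ) = u * (‖x‖ * ‖y‖) := by
    rw [hu]; field_simp
  have hns : ‖x - y‖ ^ 2 = ‖x‖ ^ 2 + ‖y‖ ^ 2 - 2 * (inner ℝ x y : ℝ) := by
    rw [@norm_sub_sq_real]; ring
  rw [hns, hinner]
  nlinarith [mul_le_mul_of_nonneg_right hk hprod.le]
end

section
/- Let H be a real inner product space and let x, y ∈ H be nonzero. Define K(x, y) = ‖x‖·‖y‖·κ( ⟨x, y⟩ / (‖x‖·‖y‖) ). Then √( K(x,x) + K(y,y) − 2·K(x,y) ) ≤ √( min(‖x‖, ‖y‖) · ‖x − y‖ ) + 2·‖x − y‖. This expresses that the kernel mapping Φ of the homogeneous two-layer ReLU NTK satisfies ‖Φ(x) − Φ(y)‖ ≤ √(min(‖x‖,‖y‖)·‖x − y‖) + 2‖x − y‖. -/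
open Real

lemma trig_core (θ : ℝ) (h0 : 0 ≤ θ) (hπ : θ ≤ π) :
    θ * (2 * Real.cos θ - 1) ≤ Real.sin θ := by
  rcases le_or_gt θ 1 with h1 | h1
  · rcases eq_or_lt_of_le h0 with rfl | h0'
    · simp
    have hs := Real.sin_gt_sub_cube h0'
    have hc : Real.cos θ = 1 - 2 * Real.sin (θ/2) ^ 2 := by
      have := Real.sin_sq_eq_half_sub (θ/2)
      rw [show 2 * (θ/2) = θ by ring] at this
      linarith
    have hs2 := Real.sin_gt_sub_cube (by linarith : (0:ℝ) < θ/2)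
    have h3 : θ^3 ≤ θ := by nlinarith [mul_nonneg h0 (mul_nonneg (by linarith : (0:ℝ) ≤ 1-θ) (by linarith : (0:ℝ) ≤ 1+θ))]
    have hp : θ/4 ≤ θ/2 - (θ/2)^3/4 := by
      have he : (θ/2)^3 = θ^3/8 := by ring
      linarith
    have hσ : θ/4 ≤ Real.sin (θ/2) := by linarith [pow_nonneg (by linarith : (0:ℝ) ≤ θ/2) 3]
    nlinarith [sq_nonneg θ, mul_le_mul hσ hσ (by linarith) (by linarith : (0:ℝ) ≤ Real.sin (θ/2))]
  · rcases le_or_gt (π/3) θ with h2 | h2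
    · have hcos : Real.cos θ ≤ 1/2 := by
        have := Real.cos_le_cos_of_nonneg_of_le_pi (by positivity : (0:ℝ) ≤ π/3) hπ h2
        rwa [Real.cos_pi_div_three] at this
      have hsin : 0 ≤ Real.sin θ := Real.sin_nonneg_of_nonneg_of_le_pi h0 hπ
      nlinarith
    · have hcos : Real.cos θ ≤ 2/3 := by
        have := Real.cos_le_cos_of_nonneg_of_le_pi (by norm_num : (0:ℝ) ≤ 1) hπ h1.le
        linarith [Real.cos_one_le]
      have hsin : 1/2 ≤ Real.sin θ := by
        have := Real.mul_le_sin h0 (by linarith [Real.pi_gt_three] : θ ≤ π/2)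
        have hπ4 := Real.pi_le_four
        have hπ0 := Real.pi_pos
        have h12 : 1/2 ≤ 2/π * θ := by
          rw [div_mul_eq_mul_div, le_div_iff₀ hπ0]; nlinarith
        linarith
      have hθ : θ ≤ 4/3 := by linarith [Real.pi_le_four]
      nlinarith

lemma kappa_lower (u : ℝ) (h1 : -1 ≤ u) (h2 : u ≤ 1) :
    2 - kappa u ≤ 2*(1-u) + (1/2) * Real.sqrt (2*(1-u)) := by
  have hπ := Real.pi_pos
  set θ := Real.arccos u with hθdef
  have hθ0 : 0 ≤ θ := Real.arccos_nonneg u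
  have hθπ : θ ≤ π := Real.arccos_le_pi u
  have hcos : Real.cos θ = u := Real.cos_arccos h1 h2
  have hsin : Real.sqrt (1 - u^2) = Real.sin θ := (Real.sin_arccos u).symm
  have hsq : Real.sin (θ/2) ^ 2 = (1 - u)/2 := by
    have := Real.sin_sq_eq_half_sub (θ/2)
    rw [show 2 * (θ/2) = θ by ring, hcos] at this
    linarith
  have hsn : 0 ≤ Real.sin (θ/2) :=
    Real.sin_nonneg_of_nonneg_of_le_pi (by linarith) (by linarith)
  have hhalf : Real.sqrt (2*(1-u)) = 2 * Real.sin (θ/2) := by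
    rw [show 2*(1-u) = (2 * Real.sin (θ/2))^2 by nlinarith,
      Real.sqrt_sq (by linarith)]
  have hcore := trig_core θ hθ0 hθπ
  have hjordan : θ ≤ π * Real.sin (θ/2) := by
    have := Real.mul_le_sin (x := θ/2) (by linarith) (by linarith)
    rw [div_mul_eq_mul_div] at this
    have := (div_le_iff₀ hπ).1 this
    nlinarith
  rw [hhalf]
  unfold kappa kappa0 kappa1
  rw [← hθdef, hsin, ← hcos]
  have key : 2 * θ * Real.cos θ - Real.sin θ ≤ π * Real.sin (θ/2) := by nlinarith
  have h2 : 2 - (Real.cos θ * ((π - θ)/π) + (Real.cos θ*(π-θ) + Real.sin θ)/π)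
      = (2*π - (2*Real.cos θ*(π-θ) + Real.sin θ))/π := by
    field_simp
    ring
  rw [h2, div_le_iff₀ hπ]
  nlinarith [key]

set_option maxHeartbeats 1000000 in
theorem ntk_homogeneous_smoothness {H : Type*} [NormedAddCommGroup H]
    [InnerProductSpace ℝ H] (x y : H) (hx : x ≠ 0) (hy : y ≠ 0)
    (K : H → H → ℝ)
    (hK : ∀ z w : H, K z w = ‖z‖ * ‖w‖ * kappa ((inner ℝ z w : ℝ) / (‖z‖ * ‖w‖))) :
    Real.sqrt (K x x + K y y - 2 * K x y)
      ≤ Real.sqrt (min ‖x‖ ‖y‖ * ‖x - y‖) + 2 * ‖x - y‖ := by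
  have ha : 0 < ‖x‖ := norm_pos_iff.mpr hx
  have hb : 0 < ‖y‖ := norm_pos_iff.mpr hy
  set a := ‖x‖ with hadef
  set b := ‖y‖ with hbdef
  set d := ‖x - y‖ with hddef
  have hd0 : 0 ≤ d := norm_nonneg _
  set u : ℝ := (inner ℝ x y : ℝ) / (a*b) with hu
  have huabs : |u| ≤ 1 := abs_real_inner_div_norm_mul_norm_le_one x y
  have hu1 : -1 ≤ u := (abs_le.1 huabs).1
  have hu2 : u ≤ 1 := (abs_le.1 huabs).2
  have hipu : (inner ℝ x y : ℝ) = a*b*u := by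
    rw [hu]; field_simp
  have hKxx : K x x = 2 * a^2 := by
    rw [hK, real_inner_self_eq_norm_sq,
      show a^2/(a*a) = 1 by field_simp, kappa_one]
    ring
  have hKyy : K y y = 2 * b^2 := by
    rw [hK, real_inner_self_eq_norm_sq,
      show b^2/(b*b) = 1 by field_simp, kappa_one]
    ring
  have hKxy : K x y = a*b*kappa u := by rw [hK]
  have hdsq : d^2 = a^2 + b^2 - 2*(a*b*u) := by
    rw [hddef, norm_sub_sq_real, hipu]; ring
  have hB := kappa_lower u hu1 hu2
  set s2 := Real.sqrt (2*(1-u)) with hs2def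
  have hs20 : 0 ≤ s2 := Real.sqrt_nonneg _
  have hs2sq : s2^2 = 2*(1-u) := Real.sq_sqrt (by linarith)
  set m := min a b with hmdef
  have hm0 : 0 ≤ m := le_min ha.le hb.le
  have habd : |a - b| ≤ d := abs_norm_sub_norm_le x y
  have hmax : Real.sqrt (a*b) ≤ m + d := by
    have h1 : a*b ≤ (m+d)^2 := by
      rcases le_total a b with h|h
      · rw [hmdef, min_eq_left h]
        nlinarith [abs_le.1 habd]
      · rw [hmdef, min_eq_right h]
        nlinarith [abs_le.1 habd]
    calc Real.sqrt (a*b) ≤ Real.sqrt ((m+d)^2) := Real.sqrt_le_sqrt h1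
      _ = m+d := Real.sqrt_sq (by linarith)
  have hkey1 : 2*(a*b)*(1-u) ≤ d^2 := by nlinarith [sq_nonneg (a-b)]
  have hkey2 : a*b*s2 ≤ Real.sqrt (a*b) * d := by
    have e1 : a*b*s2 = Real.sqrt ((a*b)^2*(2*(1-u))) := by
      rw [Real.sqrt_mul (sq_nonneg _), Real.sqrt_sq (by positivity), hs2def]
    have e2 : Real.sqrt (a*b) * d = Real.sqrt ((a*b)*d^2) := by
      rw [Real.sqrt_mul (show (0:ℝ) ≤ a*b by positivity) (d^2), Real.sqrt_sq hd0]
    rw [e1, e2]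
    apply Real.sqrt_le_sqrt
    have hab : (0:ℝ) < a*b := mul_pos ha hb
    have h3 := mul_le_mul_of_nonneg_left hkey1 hab.le
    ring_nf at h3 ⊢
    linarith
  set s1 := Real.sqrt (m*d) with hs1def
  have hs10 : 0 ≤ s1 := Real.sqrt_nonneg _
  have hs1sq : s1^2 = m*d := Real.sq_sqrt (by positivity)
  have hRHS0 : 0 ≤ s1 + 2*d := by positivity
  have hDle : K x x + K y y - 2*(K x y) ≤ (s1 + 2*d)^2 := by
    rw [hKxx, hKyy, hKxy]
    have hab : (0:ℝ) < a*b := mul_pos ha hb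
    have h1 := mul_le_mul_of_nonneg_left hB hab.le
    have h2 := mul_le_mul_of_nonneg_right hmax hd0
    have hstep : 2*a^2 + 2*b^2 - 2*(a*b*kappa u) ≤ 3*d^2 + m*d := by
      linarith [h1, h2, hkey2, hdsq]
    nlinarith [hstep, hs1sq, mul_nonneg hs10 hd0, sq_nonneg d]
  calc Real.sqrt (K x x + K y y - 2*(K x y)) ≤ Real.sqrt ((s1+2*d)^2) :=
        Real.sqrt_le_sqrt hDle
    _ = s1 + 2*d := Real.sqrt_sq hRHS0
end

section
/- Let d ≥ 1, let 0 ≤ c < 1, and let τ : ℝ^d → ℝ^d be differentiable with ‖Dτ(u)‖ ≤ c (operator norm of the derivative) for all u ∈ ℝ^d. Then for every measurable function f : ℝ^d → ℝ with ∫ f(u)² du < ∞, one has ∫ f(u − τ(u))² du ≤ (1 − c)^{−d} · ∫ f(u)² du. In particular, for ‖Dτ‖_∞ ≤ 1/2 this gives ∫ f(u − τ(u))² du ≤ 2^d · ∫ f(u)² du. -/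
open MeasureTheory

lemma det_lower_aux {d : ℕ} (hd : 1 ≤ d) {c : ℝ} (hc1 : c < 1)
    (A : EuclideanSpace ℝ (Fin d) →L[ℝ] EuclideanSpace ℝ (Fin d)) (hA : ‖A‖ ≤ c) :
    (1 - c) ^ d ≤ |(ContinuousLinearMap.id ℝ (EuclideanSpace ℝ (Fin d)) - A).det| := by
  set E := EuclideanSpace ℝ (Fin d) with hE
  haveI : Nontrivial E := Module.nontrivial_of_finrank_pos (R := ℝ)
    (by show 0 < Module.finrank ℝ (EuclideanSpace ℝ (Fin d))
        rw [finrank_euclideanSpace_fin]; omega)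
  set L : E →L[ℝ] E := ContinuousLinearMap.id ℝ E - A with hL
  have hanti : ∀ x : E, (1 - c) * ‖x‖ ≤ ‖L x‖ := by
    intro x
    have h1 : ‖A x‖ ≤ c * ‖x‖ :=
      le_trans (A.le_opNorm x) (by nlinarith [norm_nonneg x, A.le_opNorm x])
    have h2 : ‖x‖ - ‖A x‖ ≤ ‖x - A x‖ := norm_sub_norm_le _ _
    have : L x = x - A x := rfl
    rw [this]
    nlinarith
  have hinj : Function.Injective L := by
    intro x y hxy
    have : L (x - y) = 0 := by rw [map_sub, hxy, sub_self]
    have h := hanti (x - y)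
    rw [this, norm_zero] at h
    have : ‖x - y‖ ≤ 0 := by nlinarith [norm_nonneg (x - y)]
    have : x - y = 0 := by
      rw [← norm_le_zero_iff]; exact this
    exact sub_eq_zero.mp this
  have hsurj : Function.Surjective L := by
    have := LinearMap.surjective_of_injective (f := (L : E →ₗ[ℝ] E)) hinj
    exact this
  -- the image of the unit ball contains the ball of radius 1 - c
  have himg : Metric.ball (0 : E) (1 - c) ⊆ L '' Metric.ball (0 : E) 1 := by
    intro y hy
    obtain ⟨x, hx⟩ := hsurj y
    refine ⟨x, ?_, hx⟩
    rw [Metric.mem_ball, dist_zero_right] at hy ⊢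
    have h := hanti x
    rw [hx] at h
    nlinarith [norm_nonneg x]
  have hball : (volume : Measure E) (Metric.ball 0 (1 - c))
      ≤ ENNReal.ofReal |L.det| * volume (Metric.ball (0 : E) 1) := by
    rw [← MeasureTheory.Measure.addHaar_image_continuousLinearMap]
    exact measure_mono himg
  rw [MeasureTheory.Measure.addHaar_ball volume (0 : E) (by linarith : (0:ℝ) ≤ 1 - c)] at hball
  have hfr : Module.finrank ℝ E = d := finrank_euclideanSpace_fin
  rw [hfr] at hball
  have hpos : (0 : ENNReal) < volume (Metric.ball (0 : E) 1) :=
    Metric.measure_ball_pos _ _ one_pos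
  have hfin : volume (Metric.ball (0 : E) 1) ≠ ⊤ :=
    (MeasureTheory.measure_ball_lt_top).ne
  have := (ENNReal.mul_le_mul_iff_left hpos.ne' hfin).mp hball
  rwa [ENNReal.ofReal_le_ofReal_iff (abs_nonneg _)] at this

theorem deformation_l2_bound (d : ℕ) (hd : 1 ≤ d) (c : ℝ) (hc0 : 0 ≤ c) (hc1 : c < 1)
    (τ : EuclideanSpace ℝ (Fin d) → EuclideanSpace ℝ (Fin d))
    (hτ : Differentiable ℝ τ) (hDτ : ∀ u, ‖fderiv ℝ τ u‖ ≤ c)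
    (f : EuclideanSpace ℝ (Fin d) → ℝ) (hf : Measurable f)
    (hf2 : ∫⁻ u, ENNReal.ofReal (f u ^ 2) < ⊤) :
    ∫⁻ u, ENNReal.ofReal (f (u - τ u) ^ 2)
      ≤ (ENNReal.ofReal ((1 - c) ^ d))⁻¹ * ∫⁻ u, ENNReal.ofReal (f u ^ 2) := by
  set φ : EuclideanSpace ℝ (Fin d) → EuclideanSpace ℝ (Fin d) := fun u => u - τ u with hφ
  set L : EuclideanSpace ℝ (Fin d) → (EuclideanSpace ℝ (Fin d) →L[ℝ] EuclideanSpace ℝ (Fin d)) := fun u => ContinuousLinearMap.id ℝ (EuclideanSpace ℝ (Fin d)) - fderiv ℝ τ u with hLdef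
  set g : EuclideanSpace ℝ (Fin d) → ENNReal := fun u => ENNReal.ofReal (f u ^ 2) with hg
  have hderiv : ∀ u, HasFDerivAt φ (L u) u := fun u =>
    (hasFDerivAt_id u).sub (hτ u).hasFDerivAt
  -- τ is Lipschitz with constant c
  have hlip : LipschitzWith c.toNNReal τ := by
    apply lipschitzWith_of_nnnorm_fderiv_le hτ
    intro x
    rw [← norm_toNNReal]
    exact Real.toNNReal_mono (hDτ x)
  -- φ is injective
  have hinj : Function.Injective φ := by
    intro x y hxy
    have h1 : x - y = τ x - τ y := by
      have : x - τ x = y - τ y := hxy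
      abel_nf
      abel_nf at this
      linear_combination (norm := abel_nf) this
    have h2 : ‖τ x - τ y‖ ≤ c * ‖x - y‖ := by
      have := hlip.dist_le_mul x y
      rw [dist_eq_norm, dist_eq_norm] at this
      calc ‖τ x - τ y‖ ≤ c.toNNReal * ‖x - y‖ := this
        _ = c * ‖x - y‖ := by rw [Real.coe_toNNReal _ hc0]
    rw [← h1] at h2
    have : ‖x - y‖ ≤ 0 := by nlinarith [norm_nonneg (x - y)]
    have : x - y = 0 := by rw [← norm_le_zero_iff]; exact this
    exact sub_eq_zero.mp this
  -- change of variables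
  have key := MeasureTheory.lintegral_image_eq_lintegral_abs_det_fderiv_mul
    (volume : Measure (EuclideanSpace ℝ (Fin d))) MeasurableSet.univ
    (fun x _ => (hderiv x).hasFDerivWithinAt) (hinj.injOn) g
  rw [Measure.restrict_univ] at key
  have main : ENNReal.ofReal ((1 - c) ^ d) * ∫⁻ u, g (φ u) ≤ ∫⁻ u, g u := by
    calc ENNReal.ofReal ((1 - c) ^ d) * ∫⁻ u, g (φ u)
        = ∫⁻ u, ENNReal.ofReal ((1 - c) ^ d) * g (φ u) := (lintegral_const_mul' _ _ ENNReal.ofReal_ne_top).symm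
      _ ≤ ∫⁻ u, ENNReal.ofReal |(L u).det| * g (φ u) := by
          apply lintegral_mono
          intro u
          exact mul_le_mul_left
            (ENNReal.ofReal_le_ofReal (det_lower_aux hd hc1 (fderiv ℝ τ u) (hDτ u))) _
      _ = ∫⁻ x in φ '' Set.univ, g x := key.symm
      _ ≤ ∫⁻ x, g x := setLIntegral_le_lintegral _ _
  have ha0 : ENNReal.ofReal ((1 - c) ^ d) ≠ 0 := by
    rw [Ne, ENNReal.ofReal_eq_zero, not_le]
    exact pow_pos (by linarith) d
  rw [← ENNReal.div_eq_inv_mul]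
  rw [ENNReal.le_div_iff_mul_le (Or.inl ha0) (Or.inl ENNReal.ofReal_ne_top)]
  rw [mul_comm]
  exact main
end

section
/- Let p ≥ 2, let μ be the standard Gaussian measure on ℝ^p (the p-fold product of the real Gaussian N(0,1)), and let x, y ∈ ℝ^p be unit vectors. Then μ({ w ∈ ℝ^p : ⟨w, x⟩ > 0 and ⟨w, y⟩ > 0 }) = (π − arccos⟨x, y⟩) / (2π). Equivalently, 2·E_{w∼μ}[𝟙{⟨w,x⟩>0}·𝟙{⟨w,y⟩>0}] = κ₀(⟨x, y⟩). -/
open Real MeasureTheory ProbabilityTheory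

/-- The standard Gaussian measure on `ℝ^p`, the `p`-fold product of `N(0,1)`. -/
noncomputable def stdGaussian (p : ℕ) : Measure (EuclideanSpace ℝ (Fin p)) :=
  (Measure.pi fun _ : Fin p => gaussianReal 0 1).map
    (MeasurableEquiv.toLp 2 (Fin p → ℝ))

open Set
open scoped ENNReal NNReal

section Aux

noncomputable def gpdf (t : ℝ) : ℝ := (Real.sqrt (2 * π))⁻¹ * Real.exp (-t ^ 2 / 2)

lemma gpdf_nonneg (t : ℝ) : 0 ≤ gpdf t := by unfold gpdf; positivity

lemma measurable_gpdf : Measurable gpdf := by unfold gpdf; fun_prop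

lemma integrable_gpdf : Integrable gpdf := by
  unfold gpdf
  apply Integrable.const_mul
  have : (fun t : ℝ => Real.exp (-t ^ 2 / 2)) = fun t : ℝ => Real.exp (-(1/2) * t ^ 2) := by
    funext t; ring_nf
  rw [this]
  exact integrable_exp_neg_mul_sq (by norm_num)

lemma gaussianReal_eq : gaussianReal 0 1 =
    (volume : Measure ℝ).withDensity (fun t => ENNReal.ofReal (gpdf t)) := by
  rw [gaussianReal_of_var_ne_zero _ one_ne_zero]
  congr 1
  ext t
  simp only [gaussianPDF, gaussianPDFReal, gpdf]
  norm_num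

lemma lintegral_pi_prod {n : ℕ} (μ : Fin n → Measure ℝ) [∀ i, SigmaFinite (μ i)]
    (f : Fin n → ℝ → ℝ≥0∞) (hf : ∀ i, Measurable (f i)) :
    ∫⁻ w, ∏ i, f i (w i) ∂(Measure.pi μ) = ∏ i, ∫⁻ t, f i t ∂(μ i) := by
  induction n with
  | zero => simp [Measure.pi_univ]
  | succ n ih =>
      have hmp := measurePreserving_piFinSuccAbove μ 0
      set e := MeasurableEquiv.piFinSuccAbove (fun _ : Fin (n+1) => ℝ) 0 with he
      have hG : Measurable (fun y : ℝ × (Fin n → ℝ) =>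
          f 0 y.1 * ∏ j, f ((0 : Fin (n+1)).succAbove j) (y.2 j)) := by
        refine ((hf 0).comp measurable_fst).mul ?_
        exact Finset.measurable_prod _ fun j _ =>
          (hf _).comp ((measurable_pi_apply j).comp measurable_snd)
      have key : ∀ w : Fin (n+1) → ℝ, (∏ i, f i (w i)) =
          f 0 ((e w).1) * ∏ j, f ((0 : Fin (n+1)).succAbove j) ((e w).2 j) := by
        intro w
        rw [Fin.prod_univ_succAbove (fun i => f i (w i)) 0]
        simp [he, MeasurableEquiv.piFinSuccAbove, Fin.tail]
      calc ∫⁻ w, ∏ i, f i (w i) ∂(Measure.pi μ)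
          = ∫⁻ w, f 0 ((e w).1) * ∏ j, f ((0:Fin (n+1)).succAbove j) ((e w).2 j)
              ∂(Measure.pi μ) := by simp_rw [key]
        _ = ∫⁻ y, f 0 y.1 * ∏ j, f ((0:Fin (n+1)).succAbove j) (y.2 j)
              ∂((μ 0).prod (Measure.pi fun j => μ ((0:Fin (n+1)).succAbove j))) :=
            hmp.lintegral_comp hG
        _ = (∫⁻ t, f 0 t ∂(μ 0)) * ∏ j, ∫⁻ t, f ((0:Fin (n+1)).succAbove j) t
              ∂(μ ((0:Fin (n+1)).succAbove j)) := by
            rw [lintegral_prod_mul (f := f 0)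
              (g := fun v : Fin n → ℝ => ∏ j, f ((0:Fin (n+1)).succAbove j) (v j))
              ((hf 0).aemeasurable)
              (Finset.measurable_prod _ fun j _ =>
                (hf _).comp (measurable_pi_apply j)).aemeasurable]
            rw [ih (fun j => μ ((0:Fin (n+1)).succAbove j))
              (fun j => f ((0:Fin (n+1)).succAbove j)) (fun j => hf _)]
        _ = ∏ i, ∫⁻ t, f i t ∂(μ i) :=
            (Fin.prod_univ_succAbove (fun i => ∫⁻ t, f i t ∂(μ i)) 0).symm

lemma gauss_prod : (gaussianReal 0 1).prod (gaussianReal 0 1)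
    = (volume : Measure (ℝ × ℝ)).withDensity
        (fun z => ENNReal.ofReal (gpdf z.1 * gpdf z.2)) := by
  refine Measure.prod_eq fun s t hs ht => ?_
  simp_rw [fun z : ℝ × ℝ => ENNReal.ofReal_mul (p := gpdf z.1) (q := gpdf z.2) (gpdf_nonneg _)]
  rw [withDensity_apply _ (hs.prod ht), Measure.volume_eq_prod, ← Measure.prod_restrict,
    lintegral_prod_mul (f := fun a => ENNReal.ofReal (gpdf a))
      (g := fun a => ENNReal.ofReal (gpdf a))
      (measurable_gpdf.ennreal_ofReal).aemeasurable
      (measurable_gpdf.ennreal_ofReal).aemeasurable,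
    gaussianReal_eq, withDensity_apply _ hs, withDensity_apply _ ht]

lemma pi_gauss (p : ℕ) : (Measure.pi fun _ : Fin p => gaussianReal 0 1)
    = (Measure.pi fun _ : Fin p => (volume : Measure ℝ)).withDensity
        (fun w => ∏ i, ENNReal.ofReal (gpdf (w i))) := by
  refine Measure.pi_eq fun s hs => ?_
  rw [withDensity_apply _ (MeasurableSet.univ_pi hs), ← lintegral_indicator
    (MeasurableSet.univ_pi hs)]
  have key : ∀ w : Fin p → ℝ, (univ.pi s).indicator
      (fun w => ∏ i, ENNReal.ofReal (gpdf (w i))) w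
      = ∏ i, (s i).indicator (fun t => ENNReal.ofReal (gpdf t)) (w i) := by
    intro w
    by_cases hw : w ∈ univ.pi s
    · rw [indicator_of_mem hw]
      exact Finset.prod_congr rfl fun i _ =>
        (indicator_of_mem (hw i (mem_univ i)) (fun t => ENNReal.ofReal (gpdf t))).symm
    · rw [indicator_of_notMem hw]
      obtain ⟨i, hi⟩ : ∃ i, w i ∉ s i := by simpa [Set.mem_pi] using hw
      exact (Finset.prod_eq_zero (Finset.mem_univ i)
        (by rw [indicator_of_notMem hi])).symm
  simp_rw [key]
  rw [lintegral_pi_prod _ _ (fun i => (measurable_gpdf.ennreal_ofReal).indicator (hs i))]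
  refine Finset.prod_congr rfl fun i _ => ?_
  rw [lintegral_indicator (hs i), gaussianReal_eq, withDensity_apply _ (hs i)]

lemma map_withDensity {α β : Type*} [MeasurableSpace α] [MeasurableSpace β]
    (e : α ≃ᵐ β) (μ : Measure α) (f : β → ℝ≥0∞) (hf : Measurable f) :
    Measure.map e (μ.withDensity (fun a => f (e a)))
      = (Measure.map e μ).withDensity f := by
  ext s hs
  rw [Measure.map_apply e.measurable hs, withDensity_apply _ hs,
    withDensity_apply _ (e.measurable hs), setLIntegral_map hs hf e.measurable]

lemma stdGaussian_eq (p : ℕ) : _root_.stdGaussian p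
    = (volume : Measure (EuclideanSpace ℝ (Fin p))).withDensity
        (fun w => ENNReal.ofReal ((Real.sqrt (2 * π))⁻¹ ^ p * Real.exp (-‖w‖ ^ 2 / 2))) := by
  set e := MeasurableEquiv.toLp 2 (Fin p → ℝ)
  set D : EuclideanSpace ℝ (Fin p) → ℝ≥0∞ :=
    fun w => ENNReal.ofReal ((Real.sqrt (2 * π))⁻¹ ^ p * Real.exp (-‖w‖ ^ 2 / 2)) with hD
  have hDmeas : Measurable D := by
    apply Measurable.ennreal_ofReal
    fun_prop
  have hdens : ∀ w : Fin p → ℝ, (∏ i, ENNReal.ofReal (gpdf (w i))) = D (e w) := by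
    intro w
    rw [← ENNReal.ofReal_prod_of_nonneg (fun i _ => gpdf_nonneg _)]
    congr 1
    unfold gpdf
    rw [Finset.prod_mul_distrib, Finset.prod_const, ← Real.exp_sum, Finset.card_univ,
      Fintype.card_fin]
    congr 1
    · congr 1
      have hnorm : ‖e w‖ ^ 2 = ∑ i, (w i) ^ 2 := by
        rw [EuclideanSpace.norm_eq, Real.sq_sqrt (by positivity)]
        exact Finset.sum_congr rfl fun i _ => by rw [Real.norm_eq_abs, sq_abs]; rfl
      rw [hnorm, ← Finset.sum_div, ← Finset.sum_neg_distrib]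
  unfold _root_.stdGaussian
  rw [pi_gauss]
  have := map_withDensity e (Measure.pi fun _ : Fin p => (volume : Measure ℝ)) D hDmeas
  simp_rw [hdens]
  rw [this]
  congr 1
  exact ((EuclideanSpace.volume_preserving_symm_measurableEquiv_toLp (Fin p)).symm
    _).map_eq

lemma stdGaussian_map (p : ℕ) (L : EuclideanSpace ℝ (Fin p) ≃ₗᵢ[ℝ] EuclideanSpace ℝ (Fin p)) :
    Measure.map L (_root_.stdGaussian p) = _root_.stdGaussian p := by
  set D : EuclideanSpace ℝ (Fin p) → ℝ≥0∞ :=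
    fun w => ENNReal.ofReal ((Real.sqrt (2 * π))⁻¹ ^ p * Real.exp (-‖w‖ ^ 2 / 2)) with hD
  have hDmeas : Measurable D := by apply Measurable.ennreal_ofReal; fun_prop
  have hDL : (fun a => D (L a)) = D := by
    funext a; simp [hD, L.norm_map]
  rw [stdGaussian_eq]
  calc Measure.map L ((volume : Measure (EuclideanSpace ℝ (Fin p))).withDensity D)
      = Measure.map L.toHomeomorph.toMeasurableEquiv
          ((volume : Measure (EuclideanSpace ℝ (Fin p))).withDensity
            (fun a => D (L.toHomeomorph.toMeasurableEquiv a)))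
        := by rw [show (fun a => D (L.toHomeomorph.toMeasurableEquiv a)) = D from hDL]; rfl
    _ = (Measure.map L.toHomeomorph.toMeasurableEquiv
          (volume : Measure (EuclideanSpace ℝ (Fin p)))).withDensity D :=
        map_withDensity _ _ _ hDmeas
    _ = (volume : Measure (EuclideanSpace ℝ (Fin p))).withDensity D := by
        rw [show Measure.map L.toHomeomorph.toMeasurableEquiv
            (volume : Measure (EuclideanSpace ℝ (Fin p)))
          = Measure.map L (volume : Measure (EuclideanSpace ℝ (Fin p))) from rfl,
          L.measurePreserving.map_eq]

lemma stdGaussian_preimage (p : ℕ)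
    (L : EuclideanSpace ℝ (Fin p) ≃ₗᵢ[ℝ] EuclideanSpace ℝ (Fin p))
    (A : Set (EuclideanSpace ℝ (Fin p))) (hA : MeasurableSet A) :
    _root_.stdGaussian p (L ⁻¹' A) = _root_.stdGaussian p A := by
  conv_rhs => rw [← stdGaussian_map p L]
  rw [Measure.map_apply L.continuous.measurable hA]

lemma exists_adapted_basis (p : ℕ) (i j : Fin p) (hij : i ≠ j)
    (x y : EuclideanSpace ℝ (Fin p)) (hx : ‖x‖ = 1) (hy : ‖y‖ = 1) :
    ∃ b : OrthonormalBasis (Fin p) ℝ (EuclideanSpace ℝ (Fin p)), b i = x ∧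
      y = (inner ℝ x y : ℝ) • b i + Real.sqrt (1 - (inner ℝ x y : ℝ) ^ 2) • b j := by
  set c : ℝ := inner ℝ x y with hc
  set s : ℝ := Real.sqrt (1 - c ^ 2) with hs
  have hcard : Module.finrank ℝ (EuclideanSpace ℝ (Fin p)) = Fintype.card (Fin p) := by
    simp [finrank_euclideanSpace]
  set z : EuclideanSpace ℝ (Fin p) := y - c • x with hz
  have hxz : (inner ℝ x z : ℝ) = 0 := by
    rw [hz, inner_sub_right, real_inner_smul_right, real_inner_self_eq_norm_sq, hx, ← hc]
    ring
  have hnz : ‖z‖ ^ 2 = 1 - c ^ 2 := by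
    have h1 : ‖z‖ ^ 2 = ‖y‖ ^ 2 - 2 * (inner ℝ y (c • x) : ℝ) + ‖c • x‖ ^ 2 := by
      rw [hz]; exact norm_sub_sq_real y (c • x)
    have h2 : (inner ℝ y (c • x) : ℝ) = c * c := by
      rw [real_inner_smul_right]
      congr 1
      rw [real_inner_comm]
    rw [h1, h2, norm_smul, hy, hx]
    simp [Real.norm_eq_abs, sq_abs]
    ring
  have h1c : 0 ≤ 1 - c ^ 2 := hnz ▸ sq_nonneg ‖z‖
  by_cases hs0 : s = 0
  · have h0 : (1 : ℝ) - c ^ 2 = 0 := (Real.sqrt_eq_zero h1c).mp (by rw [← hs]; exact hs0)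
    have hz0 : z = 0 := by
      have : ‖z‖ ^ 2 = 0 := by rw [hnz, h0]
      exact norm_eq_zero.mp (by nlinarith [norm_nonneg z])
    have hyx : y = c • x := by rwa [hz, sub_eq_zero] at hz0
    have hv : Orthonormal ℝ (({i} : Set (Fin p)).restrict (fun _ => x)) := by
      constructor
      · intro a; exact hx
      · intro a b hab
        exact absurd (Subsingleton.elim a b) hab
    obtain ⟨b, hb⟩ := hv.exists_orthonormalBasis_extension_of_card_eq hcard
    refine ⟨b, hb i rfl, ?_⟩
    rw [hb i rfl, hs0, hyx]
    simp
  · have hzn : ‖z‖ = s := by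
      rw [hs, ← hnz, Real.sqrt_sq (norm_nonneg z)]
    have hspos : 0 < s := lt_of_le_of_ne (hs ▸ Real.sqrt_nonneg _) (Ne.symm hs0)
    set e2 : EuclideanSpace ℝ (Fin p) := s⁻¹ • z with he2
    have he2n : ‖e2‖ = 1 := by
      rw [he2, norm_smul, hzn, Real.norm_eq_abs, abs_of_pos (by positivity)]
      field_simp
    have hxe2 : (inner ℝ x e2 : ℝ) = 0 := by
      rw [he2, real_inner_smul_right, hxz, mul_zero]
    set v : Fin p → EuclideanSpace ℝ (Fin p) := fun k => if k = i then x else e2 with hv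
    have hvo : Orthonormal ℝ (({i, j} : Set (Fin p)).restrict v) := by
      constructor
      · rintro ⟨a, ha⟩
        by_cases hai : a = i <;> simp [Set.restrict, hv, hai, hx, he2n]
      · rintro ⟨a, ha⟩ ⟨b, hb⟩ hab
        have hab' : a ≠ b := by simpa [Subtype.ext_iff] using hab
        show inner ℝ (v a) (v b) = 0
        simp only [hv]
        rcases ha with ha | ha <;> rcases hb with hb | hb
        · exact absurd (ha.trans hb.symm) hab'
        · have hbj : b = j := hb
          rw [if_pos ha, if_neg (show ¬ b = i by rw [hbj]; exact hij.symm)]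
          exact hxe2
        · have haj : a = j := ha
          rw [if_pos hb, if_neg (show ¬ a = i by rw [haj]; exact hij.symm)]
          rw [real_inner_comm]
          exact hxe2
        · exact absurd ((ha : a = j).trans (hb : b = j).symm) hab'
    obtain ⟨b, hb⟩ := hvo.exists_orthonormalBasis_extension_of_card_eq hcard
    have hbi : b i = x := by
      have := hb i (by simp)
      simpa [hv] using this
    have hbj : b j = e2 := by
      have := hb j (by simp)
      simpa [hv, hij.symm] using this
    refine ⟨b, hbi, ?_⟩
    rw [hbi, hbj, he2, smul_smul, mul_inv_cancel₀ hs0, one_smul, hz]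
    abel

lemma pi_map_proj (p : ℕ) (i j : Fin p) (hij : i ≠ j) :
    Measure.map (fun w : Fin p → ℝ => (w i, w j))
        (Measure.pi fun _ : Fin p => gaussianReal 0 1)
      = (gaussianReal 0 1).prod (gaussianReal 0 1) := by
  have hT : Measurable (fun w : Fin p → ℝ => (w i, w j)) :=
    (measurable_pi_apply i).prodMk (measurable_pi_apply j)
  refine (Measure.prod_eq fun s t hs ht => ?_).symm
  rw [Measure.map_apply hT (hs.prod ht)]
  classical
  set F : Fin p → Set ℝ := fun k => if k = i then s else if k = j then t else univ with hF
  have hpre : (fun w : Fin p → ℝ => (w i, w j)) ⁻¹' (s ×ˢ t) = univ.pi F := by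
    ext w
    simp only [mem_preimage, mem_prod, Set.mem_pi, mem_univ, forall_true_left, hF]
    constructor
    · rintro ⟨h1, h2⟩ k
      by_cases hki : k = i
      · subst hki; simpa using h1
      · by_cases hkj : k = j
        · subst hkj; simp [hki, h2]
        · simp [hki, hkj]
    · intro h
      constructor
      · have := h i; simpa using this
      · have := h j; simpa [hij.symm] using this
  rw [hpre, Measure.pi_pi]
  have houter : ∀ k ∈ Finset.univ, k ∉ ({i, j} : Finset (Fin p)) →
      gaussianReal 0 1 (F k) = 1 := by
    intro k _ hk
    simp only [Finset.mem_insert, Finset.mem_singleton] at hk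
    push_neg at hk
    simp [hF, hk.1, hk.2]
  rw [← Finset.prod_subset (Finset.subset_univ ({i, j} : Finset (Fin p))) houter,
    Finset.prod_pair hij]
  simp [hF, hij.symm]

lemma wedge_iff (c : ℝ) (hc1 : -1 ≤ c) (hc2 : c ≤ 1) (r θ : ℝ) (hr : 0 < r)
    (hθ : θ ∈ Ioo (-π) π) :
    (0 < r * Real.cos θ ∧
      0 < c * (r * Real.cos θ) + Real.sqrt (1 - c ^ 2) * (r * Real.sin θ))
      ↔ (Real.arccos c - π / 2 < θ ∧ θ < π / 2) := by
  set θ₀ := Real.arccos c with hθ₀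
  have hθ₀0 : 0 ≤ θ₀ := Real.arccos_nonneg c
  have hθ₀π : θ₀ ≤ π := Real.arccos_le_pi c
  have hkey : c * (r * Real.cos θ) + Real.sqrt (1 - c ^ 2) * (r * Real.sin θ)
      = r * Real.cos (θ - θ₀) := by
    rw [Real.cos_sub, hθ₀, Real.cos_arccos hc1 hc2, Real.sin_arccos]
    ring
  rw [hkey]
  have hmul : ∀ X : ℝ, (0 < r * X ↔ 0 < X) := by
    intro X
    constructor
    · intro h; nlinarith
    · intro h; positivity
  rw [hmul, hmul]
  constructor
  · rintro ⟨h1, h2⟩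
    have hθhi : θ < π / 2 := by
      by_contra h
      push_neg at h
      exact absurd h1 (not_lt.mpr (Real.cos_nonpos_of_pi_div_two_le_of_le h
        (by linarith [hθ.2, Real.pi_pos])))
    have hθlo : -(π / 2) < θ := by
      by_contra h
      push_neg at h
      have : Real.cos (-θ) ≤ 0 := Real.cos_nonpos_of_pi_div_two_le_of_le
        (by linarith) (by linarith [hθ.1, Real.pi_pos])
      rw [Real.cos_neg] at this
      exact absurd h1 (not_lt.mpr this)
    refine ⟨?_, hθhi⟩
    by_contra h
    push_neg at h
    have h3 : Real.cos (θ₀ - θ) ≤ 0 := Real.cos_nonpos_of_pi_div_two_le_of_le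
      (by linarith) (by linarith)
    rw [show θ₀ - θ = -(θ - θ₀) by ring, Real.cos_neg] at h3
    exact absurd h2 (not_lt.mpr h3)
  · rintro ⟨hlo, hhi⟩
    constructor
    · exact Real.cos_pos_of_mem_Ioo ⟨by linarith, hhi⟩
    · exact Real.cos_pos_of_mem_Ioo ⟨by linarith, by linarith⟩

lemma integral_r_exp : ∫ r in Ioi (0:ℝ), r * Real.exp (-r ^ 2 / 2) = 1 := by
  have hform : ∀ x : ℝ, -x ^ 2 / 2 = -(1/2) * x ^ 2 := fun x => by ring
  have hderiv : ∀ x : ℝ, HasDerivAt (fun t : ℝ => -Real.exp (-t ^ 2 / 2))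
      (x * Real.exp (-x ^ 2 / 2)) x := by
    intro x
    have h1 : HasDerivAt (fun t : ℝ => -t ^ 2 / 2) (-x) x := by
      have := (hasDerivAt_pow 2 x).neg.div_const 2
      refine this.congr_deriv ?_
      simp; ring
    have h2 := (h1.exp).neg
    refine h2.congr_deriv ?_
    ring
  have hint : IntegrableOn (fun x : ℝ => x * Real.exp (-x ^ 2 / 2)) (Ioi 0) := by
    simp_rw [hform]
    exact (integrable_mul_exp_neg_mul_sq (by norm_num : (0:ℝ) < 1/2)).integrableOn
  have htend : Filter.Tendsto (fun y : ℝ => -Real.exp (-y ^ 2 / 2)) Filter.atTop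
      (nhds (-0)) := by
    apply Filter.Tendsto.neg
    simp_rw [hform]
    exact Real.tendsto_exp_atBot.comp
      ((Filter.tendsto_pow_atTop two_ne_zero).const_mul_atTop_of_neg (by norm_num))
  have := integral_Ioi_of_hasDerivAt_of_tendsto' (a := 0)
    (fun x _ => hderiv x) hint htend
  rw [this]
  norm_num

lemma gauss2d (c : ℝ) (hc1 : -1 ≤ c) (hc2 : c ≤ 1) :
    (gaussianReal 0 1).prod (gaussianReal 0 1)
      {z : ℝ × ℝ | 0 < z.1 ∧ 0 < c * z.1 + Real.sqrt (1 - c ^ 2) * z.2}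
    = ENNReal.ofReal ((π - Real.arccos c) / (2 * π)) := by
  set θ₀ := Real.arccos c with hθ₀
  have hθ₀0 : 0 ≤ θ₀ := Real.arccos_nonneg c
  have hθ₀π : θ₀ ≤ π := Real.arccos_le_pi c
  set A : Set (ℝ × ℝ) := {z | 0 < z.1 ∧ 0 < c * z.1 + Real.sqrt (1 - c ^ 2) * z.2} with hA
  have hAmeas : MeasurableSet A := by
    have : A = {z : ℝ × ℝ | 0 < z.1} ∩ {z : ℝ × ℝ | 0 < c * z.1 + Real.sqrt (1 - c ^ 2) * z.2} :=
      rfl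
    rw [this]
    exact (measurableSet_lt measurable_const measurable_fst).inter
      (measurableSet_lt measurable_const
        ((measurable_const.mul measurable_fst).add (measurable_const.mul measurable_snd)))
  set f2 : ℝ × ℝ → ℝ := fun z => gpdf z.1 * gpdf z.2 with hf2
  have hf2int : Integrable f2 (volume : Measure (ℝ × ℝ)) := by
    rw [Measure.volume_eq_prod]
    exact integrable_gpdf.mul_prod integrable_gpdf
  have hf2nn : ∀ z, 0 ≤ f2 z := fun z => mul_nonneg (gpdf_nonneg _) (gpdf_nonneg _)
  have step1 : (gaussianReal 0 1).prod (gaussianReal 0 1) A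
      = ENNReal.ofReal (∫ z in A, f2 z) := by
    rw [gauss_prod, withDensity_apply _ hAmeas,
      ofReal_integral_eq_lintegral_ofReal (hf2int.restrict)
        (Filter.Eventually.of_forall hf2nn)]
  rw [step1, ← integral_indicator hAmeas]
  rw [← integral_comp_polarCoord_symm (A.indicator f2)]
  have congr1 : ∀ p ∈ polarCoord.target,
      p.1 • A.indicator f2 (polarCoord.symm p)
        = (p.1 * Real.exp (-p.1 ^ 2 / 2)) *
          ((2 * π)⁻¹ * (Ioo (θ₀ - π / 2) (π / 2)).indicator (fun _ => (1:ℝ)) p.2) := by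
    rintro ⟨r, θ⟩ hp
    simp only [polarCoord_target, mem_prod, mem_Ioi, mem_Ioo] at hp
    obtain ⟨hr, hθ⟩ := hp
    have hsymm : polarCoord.symm (r, θ) = (r * Real.cos θ, r * Real.sin θ) := rfl
    have hf2val : f2 (r * Real.cos θ, r * Real.sin θ)
        = (2 * π)⁻¹ * Real.exp (-r ^ 2 / 2) := by
      simp only [hf2, gpdf]
      have h2π : (0:ℝ) ≤ 2 * π := by positivity
      have : (Real.sqrt (2 * π))⁻¹ * Real.exp (-(r * Real.cos θ) ^ 2 / 2)
          * ((Real.sqrt (2 * π))⁻¹ * Real.exp (-(r * Real.sin θ) ^ 2 / 2)) = (2 * π)⁻¹ *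
          (Real.exp (-(r * Real.cos θ) ^ 2 / 2) * Real.exp (-(r * Real.sin θ) ^ 2 / 2)) := by
        rw [show (Real.sqrt (2 * π))⁻¹ * Real.exp (-(r * Real.cos θ) ^ 2 / 2)
          * ((Real.sqrt (2 * π))⁻¹ * Real.exp (-(r * Real.sin θ) ^ 2 / 2))
          = ((Real.sqrt (2 * π)) * (Real.sqrt (2 * π)))⁻¹ *
            (Real.exp (-(r * Real.cos θ) ^ 2 / 2) * Real.exp (-(r * Real.sin θ) ^ 2 / 2)) by
            rw [mul_inv]; ring, Real.mul_self_sqrt h2π]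
      rw [this, ← Real.exp_add]
      congr 2
      have hpyth : (r * Real.cos θ) ^ 2 + (r * Real.sin θ) ^ 2 = r ^ 2 := by
        have := Real.sin_sq_add_cos_sq θ
        nlinarith
      nlinarith [hpyth]
    by_cases hmem : (r * Real.cos θ, r * Real.sin θ) ∈ A
    · have hang : θ ∈ Ioo (θ₀ - π / 2) (π / 2) := by
        have := (wedge_iff c hc1 hc2 r θ hr ⟨hθ.1, hθ.2⟩).mp hmem
        exact ⟨this.1, this.2⟩
      rw [hsymm, indicator_of_mem hmem, indicator_of_mem hang, hf2val]
      simp only [smul_eq_mul]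
      ring
    · have hang : θ ∉ Ioo (θ₀ - π / 2) (π / 2) := by
        intro hcon
        exact hmem ((wedge_iff c hc1 hc2 r θ hr ⟨hθ.1, hθ.2⟩).mpr ⟨hcon.1, hcon.2⟩)
      rw [hsymm, indicator_of_notMem hmem, indicator_of_notMem hang]
      simp
  rw [setIntegral_congr_fun
    (by rw [polarCoord_target]; exact measurableSet_Ioi.prod measurableSet_Ioo) congr1]
  rw [polarCoord_target, Measure.volume_eq_prod,
    setIntegral_prod_mul (fun r : ℝ => r * Real.exp (-r ^ 2 / 2))
      (fun θ : ℝ => (2 * π)⁻¹ * (Ioo (θ₀ - π / 2) (π / 2)).indicator (fun _ => (1:ℝ)) θ)]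
  rw [integral_r_exp, one_mul]
  rw [integral_const_mul, setIntegral_indicator measurableSet_Ioo]
  have hsub : Ioo (θ₀ - π / 2) (π / 2) ⊆ Ioo (-π) π := by
    apply Ioo_subset_Ioo <;> linarith [Real.pi_pos]
  rw [inter_eq_self_of_subset_right hsub]
  simp only [integral_const, smul_eq_mul, mul_one]
  rw [measureReal_def, Measure.restrict_apply_univ, Real.volume_Ioo, ENNReal.toReal_ofReal (by linarith)]
  rw [show π / 2 - (θ₀ - π / 2) = π - θ₀ by ring]
  congr 1
  field_simp

end Aux

theorem gaussian_orthant_measure (p : ℕ) (hp : 2 ≤ p)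
    (x y : EuclideanSpace ℝ (Fin p)) (hx : ‖x‖ = 1) (hy : ‖y‖ = 1) :
    _root_.stdGaussian p {w | 0 < (inner ℝ w x : ℝ) ∧ 0 < (inner ℝ w y : ℝ)}
      = ENNReal.ofReal ((π - Real.arccos (inner ℝ x y : ℝ)) / (2 * π)) := by
  set c : ℝ := inner ℝ x y with hc
  set s : ℝ := Real.sqrt (1 - c ^ 2) with hs
  have hcabs : |c| ≤ 1 := by
    have h := abs_real_inner_le_norm x y
    rw [hx, hy] at h
    simpa using h
  have hc1 : -1 ≤ c := neg_le_of_abs_le hcabs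
  have hc2 : c ≤ 1 := le_of_abs_le hcabs
  set i : Fin p := ⟨0, by omega⟩ with hi
  set j : Fin p := ⟨1, by omega⟩ with hj
  have hij : i ≠ j := by simp [hi, hj, Fin.ext_iff]
  obtain ⟨b, hbi, hby⟩ := exists_adapted_basis p i j hij x y hx hy
  set L := b.repr with hL
  set A : Set (EuclideanSpace ℝ (Fin p)) :=
    {v | 0 < v i ∧ 0 < c * v i + s * v j} with hAdef
  have hcoord : Measurable fun v : EuclideanSpace ℝ (Fin p) => (v i, v j) := by
    have h1 : Measurable fun v : EuclideanSpace ℝ (Fin p) => v i :=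
      (measurable_pi_apply i).comp (MeasurableEquiv.toLp 2 (Fin p → ℝ)).symm.measurable
    have h2 : Measurable fun v : EuclideanSpace ℝ (Fin p) => v j :=
      (measurable_pi_apply j).comp (MeasurableEquiv.toLp 2 (Fin p → ℝ)).symm.measurable
    exact h1.prodMk h2
  have hAmeas : MeasurableSet A := by
    have : A = {v : EuclideanSpace ℝ (Fin p) | 0 < v i}
        ∩ {v : EuclideanSpace ℝ (Fin p) | 0 < c * v i + s * v j} := rfl
    rw [this]
    exact (measurableSet_lt measurable_const (measurable_fst.comp hcoord)).inter
      (measurableSet_lt measurable_const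
        (((measurable_fst.comp hcoord).const_mul c).add
          ((measurable_snd.comp hcoord).const_mul s)))
  have hrepr : ∀ (w : EuclideanSpace ℝ (Fin p)) (k : Fin p),
      b.repr w k = (inner ℝ w (b k) : ℝ) := by
    intro w k
    rw [OrthonormalBasis.repr_apply_apply, real_inner_comm]
  have hSL : {w : EuclideanSpace ℝ (Fin p) | 0 < (inner ℝ w x : ℝ) ∧ 0 < (inner ℝ w y : ℝ)}
      = ⇑L ⁻¹' A := by
    ext w
    simp only [mem_setOf_eq, mem_preimage, hAdef, hL]
    have e1 : b.repr w i = (inner ℝ w x : ℝ) := by rw [hrepr, hbi]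
    have e2 : (inner ℝ w y : ℝ) = c * b.repr w i + s * b.repr w j := by
      rw [hby, inner_add_right, real_inner_smul_right, real_inner_smul_right,
        ← hrepr, ← hrepr]
    constructor
    · rintro ⟨h1, h2⟩
      exact ⟨e1 ▸ h1, by rw [← e2]; exact h2⟩
    · rintro ⟨h1, h2⟩
      exact ⟨e1 ▸ h1, by rw [e2]; exact h2⟩
  rw [hSL, stdGaussian_preimage p L A hAmeas]
  -- unfold stdGaussian as a map and project to two coordinates
  have hA2meas : MeasurableSet {z : ℝ × ℝ | 0 < z.1 ∧ 0 < c * z.1 + s * z.2} := by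
    have : {z : ℝ × ℝ | 0 < z.1 ∧ 0 < c * z.1 + s * z.2}
        = {z : ℝ × ℝ | 0 < z.1} ∩ {z : ℝ × ℝ | 0 < c * z.1 + s * z.2} := rfl
    rw [this]
    exact (measurableSet_lt measurable_const measurable_fst).inter
      (measurableSet_lt measurable_const
        ((measurable_const.mul measurable_fst).add (measurable_const.mul measurable_snd)))
  have hpre : (MeasurableEquiv.toLp 2 (Fin p → ℝ)) ⁻¹' A
      = (fun w : Fin p → ℝ => (w i, w j)) ⁻¹' {z : ℝ × ℝ | 0 < z.1 ∧ 0 < c * z.1 + s * z.2} :=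
    rfl
  rw [_root_.stdGaussian, Measure.map_apply (MeasurableEquiv.toLp 2 (Fin p → ℝ)).measurable
    hAmeas, hpre, ← Measure.map_apply
    ((measurable_pi_apply i).prodMk (measurable_pi_apply j)) hA2meas,
    pi_map_proj p i j hij, hs, gauss2d c hc1 hc2]
end
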